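/- Let u, v ∈ ℕ^N be multi-indices with unit vectors μ ≠ ν two distinct directions. Then Σ over multi-indices r with |r| ≤ p-2 of C(r+μ+ν, r+ν)·C(r+μ+ν, r+μ) = Σ over r with |r| ≤ p-2 of (r_μ+1)(r_ν+1), which equals (N+p choose N+2). -/

import Mathlib

/-- Multi-dimensional binomial coefficient. -/
def multiBinom {N : ℕ} (a b : Fin N → ℕ) : ℕ := ∏ i, (a i).choose (b i)

/-- The finset of multi-indices `m : Fin N → ℕ` with `∑ i, m i ≤ p`. -/
def multiIdx (N p : ℕ) : Finset (Fin N → ℕ) :=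
  (Fintype.piFinset fun _ : Fin N => Finset.range (p + 1)).filter
    fun m => ∑ i, m i ≤ p

/-- Unit multi-index in direction `μ` (as a natural multi-index). -/
def unitIdx {N : ℕ} (μ : Fin N) : Fin N → ℕ := fun i => if i = μ then 1 else 0

lemma mem_multiIdx {N p : ℕ} {m : Fin N → ℕ} : m ∈ multiIdx N p ↔ ∑ i, m i ≤ p := by
  simp only [multiIdx, Finset.mem_filter, Fintype.mem_piFinset, Finset.mem_range]
  refine ⟨fun h => h.2, fun h => ⟨fun i => Nat.lt_succ_of_le ?_, h⟩⟩
  exact le_trans (Finset.single_le_sum (fun j _ => Nat.zero_le _) (Finset.mem_univ i)) h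

lemma multiBinom_eq {N : ℕ} {μ ν : Fin N} (h : μ ≠ ν) (r : Fin N → ℕ) :
    multiBinom (r + unitIdx μ + unitIdx ν) (r + unitIdx ν) = r μ + 1 := by
  unfold multiBinom unitIdx
  rw [Finset.prod_eq_single μ]
  · simp [Pi.add_apply, h, Nat.choose_succ_self_right]
  · intro i _ hi
    by_cases hiν : i = ν <;> simp [Pi.add_apply, hi, hiν, Ne.symm h]
  · simp

lemma card_multiIdx (M q : ℕ) : (multiIdx M q).card = (M + q).choose M := by
  induction M generalizing q with
  | zero =>
    rw [Nat.choose_zero_right]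
    rw [Finset.card_eq_one]
    exact ⟨fun _ => 0, by ext m; simp [mem_multiIdx, funext_iff]⟩
  | succ M ih =>
    have key : (multiIdx (M + 1) q).card =
        ((Finset.range (q + 1)).sigma fun j => multiIdx M (q - j)).card := by
      apply Finset.card_nbij' (fun s => ⟨s 0, Fin.tail s⟩)
        (fun x => Fin.cons x.1 x.2)
      · intro s hs
        rw [Finset.mem_coe, mem_multiIdx, Fin.sum_univ_succ] at hs
        simp only [Finset.mem_coe, Finset.mem_sigma, Finset.mem_range, mem_multiIdx]
        refine ⟨Nat.lt_succ_of_le (le_trans (Nat.le_add_right _ _) hs), ?_⟩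
        show ∑ i : Fin M, s i.succ ≤ q - s 0
        omega
      · intro x hx
        simp only [Finset.mem_coe, Finset.mem_sigma, Finset.mem_range, mem_multiIdx] at hx
        rw [Finset.mem_coe, mem_multiIdx, Fin.sum_univ_succ]
        simp only [Fin.cons_zero, Fin.cons_succ]
        omega
      · intro s _; exact Fin.cons_self_tail s
      · intro x _
        exact Sigma.ext rfl (heq_of_eq (by simp only [Fin.tail_cons]))
    rw [key, Finset.card_sigma]
    calc ∑ j ∈ Finset.range (q + 1), (multiIdx M (q - j)).card
        = ∑ j ∈ Finset.range (q + 1), (M + (q - j)).choose M :=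
          Finset.sum_congr rfl fun j _ => ih _
      _ = ∑ j ∈ Finset.range (q + 1), (M + j).choose M := by
          have := Finset.sum_range_reflect (fun j => (M + j).choose M) (q + 1)
          simpa using this
      _ = ∑ m ∈ Finset.Icc M (M + q), m.choose M := by
          rw [← Finset.Ico_add_one_right_eq_Icc, Finset.sum_Ico_eq_sum_range,
            show M + q + 1 - M = q + 1 from by omega]
      _ = (M + q + 1).choose (M + 1) := Nat.sum_Icc_choose _ _
      _ = (M + 1 + q).choose (M + 1) := by ring_nf

private def Fwd {N : ℕ} (μ ν : Fin N) (x : (_ : Fin N → ℕ) × ℕ × ℕ) : Fin (N + 2) → ℕ :=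
  Fin.append
    (fun i => if i = μ then x.2.1 else if i = ν then x.2.2 else x.1 i)
    ![x.1 μ - x.2.1, x.1 ν - x.2.2]

private def Bwd {N : ℕ} (μ ν : Fin N) (s : Fin (N + 2) → ℕ) : (_ : Fin N → ℕ) × ℕ × ℕ :=
  ⟨(fun i => s (Fin.castAdd 2 i) + (if i = μ then s (Fin.natAdd N 0) else 0)
      + (if i = ν then s (Fin.natAdd N 1) else 0)),
    (s (Fin.castAdd 2 μ), s (Fin.castAdd 2 ν))⟩

lemma sum_weight {N : ℕ} (q : ℕ) {μ ν : Fin N} (h : μ ≠ ν) :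
    ∑ r ∈ multiIdx N q, (r μ + 1) * (r ν + 1) = (multiIdx (N + 2) q).card := by
  have step1 : ∑ r ∈ multiIdx N q, (r μ + 1) * (r ν + 1)
      = ((multiIdx N q).sigma fun r =>
          Finset.range (r μ + 1) ×ˢ Finset.range (r ν + 1)).card := by
    rw [Finset.card_sigma]
    simp [Finset.card_product]
  rw [step1]; clear step1
  apply Finset.card_nbij' (Fwd μ ν) (Bwd μ ν)
  · rintro ⟨r, a, b⟩ hx
    simp only [Finset.mem_coe, Finset.mem_sigma, mem_multiIdx, Finset.mem_product, Finset.mem_range] at hx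
    obtain ⟨hr, ha, hb⟩ := hx
    simp only [Fwd]
    rw [Finset.mem_coe, mem_multiIdx, Fin.sum_univ_add]
    have hpt : ∀ i ∈ Finset.univ, ((if i = μ then a else if i = ν then b else r i)
        + ((if i = μ then r μ - a else 0) + (if i = ν then r ν - b else 0))) = r i := by
      intro i _
      by_cases hiμ : i = μ
      · subst hiμ; simp [h]; omega
      · by_cases hiν : i = ν
        · subst hiν; simp [hiμ]; omega
        · simp [hiμ, hiν]
    have hsum := Finset.sum_congr rfl hpt
    rw [Finset.sum_add_distrib, Finset.sum_add_distrib] at hsum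
    simp only [Finset.sum_ite_eq', Finset.mem_univ, if_true] at hsum
    simp only [Fin.append_right, Fin.sum_univ_two, Fin.append_left]
    simp only [Matrix.cons_val_zero, Matrix.cons_val_one, Matrix.head_cons]
    have heta : Finset.univ.sum r = ∑ i : Fin N, r i := rfl
    omega
  · intro s hs
    rw [Finset.mem_coe, mem_multiIdx] at hs
    simp only [Bwd, Finset.mem_coe, Finset.mem_sigma, mem_multiIdx, Finset.mem_product, Finset.mem_range]
    refine ⟨?_, ?_, ?_⟩
    · calc ∑ i : Fin N, (s (Fin.castAdd 2 i) + (if i = μ then s (Fin.natAdd N 0) else 0)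
            + (if i = ν then s (Fin.natAdd N 1) else 0))
          = ∑ i : Fin (N + 2), s i := by
            rw [Fin.sum_univ_add (f := s), Fin.sum_univ_two]
            rw [Finset.sum_add_distrib, Finset.sum_add_distrib]
            simp [Finset.sum_ite_eq']
            omega
        _ ≤ q := hs
    · simp [h]
    · simp [Ne.symm h]
  · rintro ⟨r, a, b⟩ hx
    simp only [Finset.mem_coe, Finset.mem_sigma, mem_multiIdx, Finset.mem_product, Finset.mem_range] at hx
    obtain ⟨hr, ha, hb⟩ := hx
    simp only [Fwd, Bwd, Fin.append_left, Fin.append_right]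
    refine Sigma.ext ?_ ?_
    · funext i
      simp only [Fin.append_left, Fin.append_right]
      by_cases hiμ : i = μ
      · subst hiμ; simp [h, Matrix.cons_val_zero]; omega
      · by_cases hiν : i = ν
        · subst hiν; simp [hiμ, Matrix.cons_val_one, Matrix.head_cons]; omega
        · simp [hiμ, hiν]
    · apply heq_of_eq
      simp [h, Ne.symm h]
  · intro s hs
    simp only [Fwd, Bwd]
    funext j
    refine Fin.addCases (fun i => ?_) (fun k => ?_) j
    · simp only [Fin.append_left]
      by_cases hiμ : i = μ
      · subst hiμ; simp
      · by_cases hiν : i = ν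
        · subst hiν; simp [hiμ]
        · simp [hiμ, hiν]
    · simp only [Fin.append_right]
      fin_cases k
      · simp [h]
      · simp [h.symm, h]

theorem sum_multiBinom_two_units {N p : ℕ} (hp : 2 ≤ p) (μ ν : Fin N) (hμν : μ ≠ ν) :
    (∑ r ∈ multiIdx N (p - 2),
        multiBinom (r + unitIdx μ + unitIdx ν) (r + unitIdx ν) *
          multiBinom (r + unitIdx μ + unitIdx ν) (r + unitIdx μ) =
      ∑ r ∈ multiIdx N (p - 2), (r μ + 1) * (r ν + 1)) ∧
    (∑ r ∈ multiIdx N (p - 2), (r μ + 1) * (r ν + 1) = (N + p).choose (N + 2)) := by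
  constructor
  · apply Finset.sum_congr rfl
    intro r _
    rw [multiBinom_eq hμν r]
    have : r + unitIdx μ + unitIdx ν = r + unitIdx ν + unitIdx μ := by
      funext i; simp [Pi.add_apply]; ring
    rw [this, multiBinom_eq hμν.symm r]
  · rw [sum_weight (p - 2) hμν, card_multiIdx]
    congr 1
    omega
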